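/- Fix x = (x₁, …, x_n) ∈ (L^×)^n and let f = Σ_{I ∈ ℤ^n} a_I t^I be a Laurent polynomial in n variables with coefficients a_I ∈ k, finitely many nonzero. For g = (g₁, …, g_n) ∈ (k^×)^n write f(g·x) = Σ_I a_I g^I x^I ∈ L, where g^I = Π_m g_m^{I_m} and x^I = Π_m x_m^{I_m}. Then sup_{g ∈ (k^×)^n} ‖f(g·x)‖ = max { ‖x^I‖ : I with a_I ≠ 0 } (the sup of the empty set being 0), and there exists a nonzero Laurent polynomial h over k such that ‖f(g·x)‖ attains this maximum for every g ∈ (k^×)^n with h(g) ≠ 0. (This shows that for the torus, the generic-translate valuation recovers the classical tropicalization.) -/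

import Mathlib

/-- Evaluation of a Laurent polynomial `h` (a finitely supported family of coefficients
indexed by `ℤ^n`) at a point `g ∈ (k^×)^n`. -/
noncomputable def laurentEval {k : Type*} [Field k] {n : ℕ}
    (g : Fin n → kˣ) (h : (Fin n → ℤ) →₀ k) : k :=
  ∑ I ∈ h.support, h I * ∏ m, ((g m ^ I m : kˣ) : k)

/-- `f(g·x) = ∑_I a_I g^I x^I` for a Laurent polynomial `f = ∑_I a_I t^I` over `k`,
`g ∈ (k^×)^n` and `x ∈ (L^×)^n`. -/
noncomputable def translatedEval {k L : Type*} [Field k] [Field L] [Algebra k L] {n : ℕ}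
    (x : Fin n → Lˣ) (g : Fin n → kˣ) (f : (Fin n → ℤ) →₀ k) : L :=
  ∑ I ∈ f.support,
    algebraMap k L (f I * ∏ m, ((g m ^ I m : kˣ) : k)) * ∏ m, ((x m ^ I m : Lˣ) : L)

section auxlemmas

lemma laurentEval_eq_sum {k : Type*} [Field k] {n : ℕ}
    (g : Fin n → kˣ) (h : (Fin n → ℤ) →₀ k) {T : Finset (Fin n → ℤ)} (hT : h.support ⊆ T) :
    laurentEval g h = ∑ I ∈ T, h I * ∏ m, ((g m ^ I m : kˣ) : k) :=
  Finset.sum_subset hT fun I _ hI => by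
    simp [Finsupp.notMem_support_iff.mp hI]

noncomputable def chi {k : Type*} [Field k] {n : ℕ} (I : Fin n → ℤ) :
    (Fin n → kˣ) →* k where
  toFun g := ∏ m, ((g m ^ I m : kˣ) : k)
  map_one' := by simp
  map_mul' g g' := by
    simp only [Pi.mul_apply, mul_zpow, Units.val_mul, Finset.prod_mul_distrib]

lemma exists_zpow_ne_one {k : Type*} [Field k] [Infinite k] {d : ℤ} (hd : d ≠ 0) :
    ∃ t : kˣ, t ^ d ≠ 1 := by
  haveI : Infinite ({(0:k)}ᶜ : Set k) := Set.infinite_coe_iff.2 ((Set.finite_singleton 0).infinite_compl)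
  haveI : Infinite kˣ := Infinite.of_injective
    (fun a : ({(0:k)}ᶜ : Set k) => Units.mk0 a.1 (Set.mem_compl_singleton_iff.mp a.2))
    (fun a b hab => Subtype.ext (by simpa using congrArg Units.val hab))
  haveI : NeZero d.natAbs := ⟨Int.natAbs_ne_zero.2 hd⟩
  by_contra hc
  push_neg at hc
  have h1 : ∀ t : kˣ, t ^ d.natAbs = 1 := by
    intro t
    rcases Int.natAbs_eq d with h | h
    · have := hc t; rwa [h, zpow_natCast] at this
    · have := hc t; rwa [h, zpow_neg, zpow_natCast, inv_eq_one] at this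
  have hinj : Function.Injective
      (fun t : kˣ => (⟨t, (mem_rootsOfUnity _ _).2 (h1 t)⟩ : rootsOfUnity d.natAbs k)) :=
    fun a b hab => by simpa using congrArg Subtype.val hab
  haveI : Finite kˣ := Finite.of_injective _ hinj
  exact not_finite kˣ

lemma chi_injective {k : Type*} [Field k] [Infinite k] {n : ℕ} :
    Function.Injective (chi (k := k) (n := n)) := by
  intro I J hIJ
  funext m
  by_contra hm
  obtain ⟨t, ht⟩ := exists_zpow_ne_one (k := k) (sub_ne_zero.2 hm)
  have hev := congrArg (fun φ : (Fin n → kˣ) →* k => φ (Function.update 1 m t)) hIJ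
  have hcomp : ∀ E : Fin n → ℤ,
      chi (k := k) E (Function.update 1 m t) = ((t ^ E m : kˣ) : k) := by
    intro E
    show (∏ m', ((Function.update (1 : Fin n → kˣ) m t m' ^ E m' : kˣ) : k)) = ((t ^ E m : kˣ) : k)
    rw [Finset.prod_eq_single m (fun m' _ hne => by simp [Function.update_of_ne hne]) (by simp)]
    simp
  rw [hcomp I, hcomp J] at hev
  have : (t : kˣ) ^ I m = t ^ J m := Units.ext hev
  apply ht
  rw [zpow_sub, this, mul_inv_cancel]

lemma exists_laurentEval_ne_zero {k : Type*} [Field k] [Infinite k] {n : ℕ}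
    (h : (Fin n → ℤ) →₀ k) (hh : h ≠ 0) : ∃ g : Fin n → kˣ, laurentEval g h ≠ 0 := by
  by_contra hc
  push_neg at hc
  have li : LinearIndependent k
      (fun I : Fin n → ℤ => ((chi (k := k) I : (Fin n → kˣ) →* k) : (Fin n → kˣ) → k)) :=
    (linearIndependent_monoidHom (Fin n → kˣ) k).comp chi chi_injective
  obtain ⟨I, hI⟩ := Finsupp.support_nonempty_iff.2 hh
  have hsum : ∑ J ∈ h.support, h J • ((chi (k := k) J : (Fin n → kˣ) →* k) : (Fin n → kˣ) → k) = 0 := by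
    funext g
    rw [Finset.sum_apply]
    simpa [chi, smul_eq_mul, laurentEval] using hc g
  exact Finsupp.mem_support_iff.1 hI (linearIndependent_iff'.1 li h.support _ hsum I hI)

section val
variable {L : Type*} [Field L] (v : L → NNReal)

lemma v_sum_le (hadd : ∀ a b : L, v (a + b) ≤ max (v a) (v b))
    (hzero : ∀ a : L, v a = 0 ↔ a = 0) {ι : Type*} (s : Finset ι) (F : ι → L) :
    v (∑ i ∈ s, F i) ≤ s.sup fun i => v (F i) := by
  classical
  induction s using Finset.induction_on with
  | empty => simp [(hzero 0).2 rfl]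
  | insert a s hx ih =>
    rw [Finset.sum_insert hx, Finset.sup_insert]
    exact le_trans (hadd _ _) (max_le_max le_rfl ih)

lemma v_one (hmul : ∀ a b : L, v (a * b) = v a * v b)
    (hzero : ∀ a : L, v a = 0 ↔ a = 0) : v 1 = 1 := by
  have h1 : v 1 ≠ 0 := fun h => one_ne_zero ((hzero 1).1 h)
  have := hmul 1 1
  rw [one_mul] at this
  exact (mul_right_cancel₀ h1 (by rw [← this, one_mul])).symm

lemma v_sq_one {u : NNReal} (h : u * u = 1) : u = 1 := by
  rcases lt_trichotomy u 1 with hlt | he | hgt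
  · have h2 : u * u < 1 := by simpa using mul_lt_mul'' hlt hlt zero_le zero_le
    exact absurd h h2.ne
  · exact he
  · have h2 : 1 < u * u := by simpa using mul_lt_mul'' hgt hgt zero_le zero_le
    exact absurd h h2.ne'

lemma v_neg (hmul : ∀ a b : L, v (a * b) = v a * v b)
    (hzero : ∀ a : L, v a = 0 ↔ a = 0) (a : L) : v (-a) = v a := by
  have hm1 : v (-1) = 1 := by
    apply v_sq_one
    rw [← hmul, neg_one_mul, neg_neg, v_one v hmul hzero]
  calc v (-a) = v ((-1) * a) := by rw [neg_one_mul]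
  _ = v (-1) * v a := hmul _ _
  _ = v a := by rw [hm1, one_mul]

lemma v_add_eq (hmul : ∀ a b : L, v (a * b) = v a * v b)
    (hadd : ∀ a b : L, v (a + b) ≤ max (v a) (v b))
    (hzero : ∀ a : L, v a = 0 ↔ a = 0) {a b : L} (h : v b < v a) : v (a + b) = v a := by
  refine le_antisymm (le_trans (hadd a b) (by rw [max_eq_left h.le])) ?_
  by_contra hc
  push_neg at hc
  have h2 : v a ≤ max (v (a + b)) (v b) := by
    calc v a = v ((a + b) + (-b)) := by rw [add_neg_cancel_right]
    _ ≤ max (v (a + b)) (v (-b)) := hadd _ _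
    _ = max (v (a + b)) (v b) := by rw [v_neg v hmul hzero]
  exact absurd h2 (not_le.2 (max_lt hc h))

end val
end auxlemmas


/-- For the torus, the generic-translate valuation recovers the classical tropicalization:
`sup_{g ∈ (k^×)^n} ‖f(g·x)‖ = max { ‖x^I‖ : a_I ≠ 0 }`, and this maximum is attained on a
nonempty Zariski-open set of `k`-points `g` of the torus. -/
theorem statement8
    {k L : Type*} [Field k] [IsAlgClosed k] [Field L] [Algebra k L]
    (v : L → NNReal)
    (hmul : ∀ a b : L, v (a * b) = v a * v b)
    (hadd : ∀ a b : L, v (a + b) ≤ max (v a) (v b))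
    (hzero : ∀ a : L, v a = 0 ↔ a = 0)
    (htriv : ∀ c : k, c ≠ 0 → v (algebraMap k L c) = 1)
    (n : ℕ) (x : Fin n → Lˣ) (f : (Fin n → ℤ) →₀ k) :
    (⨆ g : Fin n → kˣ, v (translatedEval x g f)) =
      (f.support.sup fun I => v (∏ m, ((x m ^ I m : Lˣ) : L))) ∧
    ∃ h : (Fin n → ℤ) →₀ k, h ≠ 0 ∧
      ∀ g : Fin n → kˣ, laurentEval g h ≠ 0 →
        v (translatedEval x g f) =
          f.support.sup fun I => v (∏ m, ((x m ^ I m : Lˣ) : L)) := by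
  classical
  by_cases hf : f = 0
  · subst hf
    have hTE : ∀ g : Fin n → kˣ, translatedEval x g (0 : (Fin n → ℤ) →₀ k) = 0 := by
      intro g; simp [translatedEval]
    constructor
    · simp only [hTE]
      rw [ciSup_const]
      simp [(hzero 0).2 rfl]
    · refine ⟨Finsupp.single 0 1, fun e => one_ne_zero (Finsupp.single_eq_zero.1 e), fun g _ => ?_⟩
      simp [hTE, (hzero 0).2 rfl]
  · have hne : f.support.Nonempty := Finsupp.support_nonempty_iff.2 hf
    set M := f.support.sup fun I => v (∏ m, ((x m ^ I m : Lˣ) : L)) with hMdef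
    set P : (Fin n → ℤ) → Lˣ := fun I => ∏ m, x m ^ I m with hPdef
    have hP : ∀ I : Fin n → ℤ, (∏ m, ((x m ^ I m : Lˣ) : L)) = ((P I : Lˣ) : L) :=
      fun I => (Units.coe_prod _ _).symm
    have hMP : M = f.support.sup fun I => v ((P I : Lˣ) : L) := by
      rw [hMdef]; exact Finset.sup_congr rfl fun I _ => by rw [hP]
    have hvP : ∀ I : Fin n → ℤ, v ((P I : Lˣ) : L) ≠ 0 := fun I => by
      rw [Ne, hzero]; exact Units.ne_zero _
    obtain ⟨I₀, hI₀mem, hI₀⟩ := Finset.exists_mem_eq_sup f.support hne fun I => v ((P I : Lˣ) : L)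
    have hMI₀ : M = v ((P I₀ : Lˣ) : L) := by rw [hMP, hI₀]
    have hM0 : M ≠ 0 := by rw [hMI₀]; exact hvP I₀
    have hGk : ∀ (g : Fin n → kˣ) (I : Fin n → ℤ), (∏ m, ((g m ^ I m : kˣ) : k)) ≠ 0 := by
      intro g I
      rw [← Units.coe_prod]
      exact Units.ne_zero _
    have hub : ∀ g : Fin n → kˣ, v (translatedEval x g f) ≤ M := by
      intro g
      refine le_trans (v_sum_le v hadd hzero _ _) (Finset.sup_le fun I hI => ?_)
      rw [hmul, htriv _ (mul_ne_zero (Finsupp.mem_support_iff.1 hI) (hGk g I)), one_mul, hMdef]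
      exact Finset.le_sup (f := fun I => v (∏ m, ((x m ^ I m : Lˣ) : L))) hI
    -- the valuation ring and its maximal ideal, as k-submodules
    set O : Submodule k L :=
      { carrier := {a | v a ≤ 1}
        add_mem' := fun ha hb => le_trans (hadd _ _) (max_le ha hb)
        zero_mem' := by simp only [Set.mem_setOf_eq, (hzero 0).2 rfl]; exact zero_le
        smul_mem' := by
          intro c a ha
          rcases eq_or_ne c 0 with rfl | hc
          · simp only [zero_smul, Set.mem_setOf_eq, (hzero 0).2 rfl]; exact zero_le
          · show v (c • a) ≤ 1
            rw [Algebra.smul_def, hmul, htriv c hc, one_mul]; exact ha } with hOdef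
    set mm : Submodule k L :=
      { carrier := {a | v a < 1}
        add_mem' := fun ha hb => lt_of_le_of_lt (hadd _ _) (max_lt ha hb)
        zero_mem' := by simp only [Set.mem_setOf_eq, (hzero 0).2 rfl]; exact zero_lt_one
        smul_mem' := by
          intro c a ha
          rcases eq_or_ne c 0 with rfl | hc
          · simp only [zero_smul, Set.mem_setOf_eq, (hzero 0).2 rfl]; exact zero_lt_one
          · show v (c • a) < 1
            rw [Algebra.smul_def, hmul, htriv c hc, one_mul]; exact ha } with hmmdef
    set mO : Submodule k O := mm.comap O.subtype with hmOdef
    set π : O →ₗ[k] (O ⧸ mO) := mO.mkQ with hπdef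
    have hπ0 : ∀ w : O, π w = 0 ↔ v (w : L) < 1 := by
      intro w
      rw [hπdef, Submodule.mkQ_apply, Submodule.Quotient.mk_eq_zero]
      exact Iff.rfl
    set b := Module.Basis.ofVectorSpace k (O ⧸ mO) with hbdef
    set S : Finset (Fin n → ℤ) := f.support.filter fun I => v ((P I : Lˣ) : L) = M with hSdef
    have hSsub : S ⊆ f.support := Finset.filter_subset _ _
    have hI₀S : I₀ ∈ S := Finset.mem_filter.2 ⟨hI₀mem, hMI₀.symm⟩
    set u : (Fin n → ℤ) → Lˣ := fun I => P (I - I₀) with hudef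
    have hPmul : ∀ I : Fin n → ℤ, u I * P I₀ = P I := by
      intro I
      show (∏ m, x m ^ (I - I₀) m) * (∏ m, x m ^ I₀ m) = ∏ m, x m ^ I m
      rw [← Finset.prod_mul_distrib]
      refine Finset.prod_congr rfl fun m _ => ?_
      rw [Pi.sub_apply, ← zpow_add, sub_add_cancel]
    have hu1 : ∀ I ∈ S, v ((u I : Lˣ) : L) = 1 := by
      intro I hI
      have h2 : v ((P I : Lˣ) : L) = M := (Finset.mem_filter.1 hI).2
      have h1 : v ((u I : Lˣ) : L) * M = 1 * M := by
        rw [one_mul, hMI₀, ← hmul, ← Units.val_mul, hPmul I, h2, hMI₀]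
      exact mul_right_cancel₀ hM0 h1
    set uO : (Fin n → ℤ) → O :=
      fun I => if h : v ((u I : Lˣ) : L) ≤ 1 then ⟨((u I : Lˣ) : L), h⟩ else 0 with huOdef
    have huO : ∀ I ∈ S, ((uO I : O) : L) = ((u I : Lˣ) : L) := by
      intro I hI
      simp only [huOdef]
      rw [dif_pos (le_of_eq (hu1 I hI))]
    have hπI₀ : π (uO I₀) ≠ 0 := by
      rw [Ne, hπ0, huO I₀ hI₀S, hu1 I₀ hI₀S]
      exact lt_irrefl 1
    have hreprne : b.repr (π (uO I₀)) ≠ 0 :=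
      fun hh => hπI₀ ((LinearEquiv.map_eq_zero_iff b.repr).1 hh)
    obtain ⟨j, hj⟩ := Finsupp.support_nonempty_iff.2 hreprne
    set c : (Fin n → ℤ) → k := fun I => b.repr (π (uO I)) j with hcdef
    have hcI₀ : c I₀ ≠ 0 := Finsupp.mem_support_iff.1 hj
    set h : (Fin n → ℤ) →₀ k := ∑ I ∈ S, Finsupp.single I (f I * c I) with hhdef
    have hcoeff : ∀ J : Fin n → ℤ, h J = if J ∈ S then f J * c J else 0 := by
      intro J
      rw [hhdef, Finsupp.finset_sum_apply]
      simp only [Finsupp.single_apply]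
      exact Finset.sum_ite_eq' S J fun I => f I * c I
    have hhsupp : h.support ⊆ S := by
      intro J hJ
      by_contra hJS
      exact Finsupp.mem_support_iff.1 hJ (by rw [hcoeff J, if_neg hJS])
    have hhne : h ≠ 0 := by
      intro h0
      have h1 := hcoeff I₀
      rw [h0] at h1
      simp only [Finsupp.coe_zero, Pi.zero_apply, if_pos hI₀S] at h1
      exact (mul_ne_zero (Finsupp.mem_support_iff.1 hI₀mem) hcI₀) h1.symm
    have main : ∀ g : Fin n → kˣ, laurentEval g h ≠ 0 → v (translatedEval x g f) = M := by
      intro g hg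
      set s : (Fin n → ℤ) → k := fun I => f I * ∏ m, ((g m ^ I m : kˣ) : k) with hsdef
      have hsne : ∀ I ∈ f.support, s I ≠ 0 := fun I hI =>
        mul_ne_zero (Finsupp.mem_support_iff.1 hI) (hGk g I)
      set w : O := ∑ I ∈ S, s I • uO I with hwdef
      have hrepr : b.repr (π w) j = laurentEval g h := by
        calc b.repr (π w) j
            = (∑ I ∈ S, s I • b.repr (π (uO I))) j := by
              rw [hwdef, map_sum, map_sum]
              simp only [map_smul]
          _ = ∑ I ∈ S, s I * c I := by
              rw [Finset.sum_apply']
              simp only [Finsupp.smul_apply, smul_eq_mul]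
              rfl
          _ = ∑ I ∈ S, h I * ∏ m, ((g m ^ I m : kˣ) : k) := by
              refine Finset.sum_congr rfl fun I hI => ?_
              rw [hcoeff I, if_pos hI, hsdef]
              ring
          _ = laurentEval g h := (laurentEval_eq_sum g h hhsupp).symm
      have hπw : π w ≠ 0 := by
        intro h0
        apply hg
        rw [← hrepr, h0, map_zero]
        rfl
      have hw1 : v ((w : O) : L) = 1 :=
        le_antisymm w.2 (not_lt.1 fun hlt => hπw ((hπ0 w).2 hlt))
      have hwcoe : ((w : O) : L) = ∑ I ∈ S, algebraMap k L (s I) * ((u I : Lˣ) : L) := by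
        calc ((w : O) : L) = O.subtype w := rfl
          _ = ∑ I ∈ S, s I • ((uO I : O) : L) := by
              rw [hwdef, map_sum]
              simp only [map_smul]
              rfl
          _ = ∑ I ∈ S, algebraMap k L (s I) * ((u I : Lˣ) : L) :=
              Finset.sum_congr rfl fun I hI => by rw [Algebra.smul_def, huO I hI]
      have hterm : translatedEval x g f
          = ∑ I ∈ f.support, algebraMap k L (s I) * ((P I : Lˣ) : L) := by
        rw [translatedEval]
        exact Finset.sum_congr rfl fun I _ => by rw [hP]
      have hsplit : translatedEval x g f =
          ((P I₀ : Lˣ) : L) * ((w : O) : L)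
            + ∑ I ∈ f.support \ S, algebraMap k L (s I) * ((P I : Lˣ) : L) := by
        rw [hterm, ← Finset.sum_sdiff hSsub, add_comm]
        congr 1
        rw [hwcoe, Finset.mul_sum]
        refine Finset.sum_congr rfl fun I hI => ?_
        rw [← hPmul I, Units.val_mul]
        ring
      have htail : v (∑ I ∈ f.support \ S, algebraMap k L (s I) * ((P I : Lˣ) : L)) < M := by
        refine lt_of_le_of_lt (v_sum_le v hadd hzero _ _) ?_
        rw [Finset.sup_lt_iff (show (⊥ : NNReal) < M from pos_iff_ne_zero.2 hM0)]
        intro I hI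
        obtain ⟨hIf, hIS⟩ := Finset.mem_sdiff.1 hI
        rw [hmul, htriv _ (hsne I hIf), one_mul]
        refine lt_of_le_of_ne ?_ ?_
        · rw [hMP]; exact Finset.le_sup (f := fun I => v ((P I : Lˣ) : L)) hIf
        · intro he; exact hIS (Finset.mem_filter.2 ⟨hIf, he⟩)
      have hA : v (((P I₀ : Lˣ) : L) * ((w : O) : L)) = M := by
        rw [hmul, hw1, mul_one, ← hMI₀]
      rw [hsplit, v_add_eq v hmul hadd hzero (by rw [hA]; exact htail), hA]
    refine ⟨?_, h, hhne, fun g hg => main g hg⟩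
    apply le_antisymm
    · exact ciSup_le hub
    · obtain ⟨g₀, hg₀⟩ := exists_laurentEval_ne_zero h hhne
      rw [← main g₀ hg₀]
      exact le_ciSup ⟨M, by rintro y ⟨g, rfl⟩; exact hub g⟩ g₀
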